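/- For every natural number n ≥ 4, Q(n) ≥ (⌊n/2⌋ − 1)! / 2^{⌊n/4⌋}; that is, there exists a family of at least (⌊n/2⌋ − 1)!/2^{⌊n/4⌋} Hamilton paths of the complete graph K_n on [n] = {1, …, n} such that any two distinct members of the family are crossing. -/

import Mathlib

/-- The edge set of the Hamilton path of the complete graph on `Fin n` that visits
the vertices in the order `σ 0, σ 1, …, σ (n-1)`. -/
def hamPathEdges (n : ℕ) (σ : Equiv.Perm (Fin n)) : Finset (Sym2 (Fin n)) :=
  Finset.univ.image (fun p : {i : Fin n // (i : ℕ) + 1 < n} =>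
    s(σ p.1, σ ⟨(p.1 : ℕ) + 1, p.2⟩))

/-- `E` is the edge set of a Hamilton path of the complete graph on `Fin n`. -/
def IsHamPath (n : ℕ) (E : Finset (Sym2 (Fin n))) : Prop :=
  ∃ σ : Equiv.Perm (Fin n), E = hamPathEdges n σ

/-- Two Hamilton paths (given by their edge sets) are crossing if their union has
a vertex of degree 4. -/
def Crossing (n : ℕ) (E₁ E₂ : Finset (Sym2 (Fin n))) : Prop :=
  ∃ v : Fin n, ((E₁ ∪ E₂).filter (fun e => v ∈ e)).card = 4

/-- For every `n ≥ 4` there is a family of at least `(⌊n/2⌋ − 1)! / 2^(⌊n/4⌋)`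
Hamilton paths of `K_n`, any two distinct members of which are crossing. -/
def QBtw (x y z : ℕ) : Prop := (x < z ∧ z < y) ∨ (y < z ∧ z < x)

def Qp (x y z : ℕ) : Prop := Xor' (y < x) (QBtw x y z)

lemma Qp_swap_xy {x y z : ℕ} (h : x ≠ y) : Qp x y z ↔ ¬ Qp y x z := by
  simp only [Qp, Xor', xor_def, QBtw]; omega

lemma Qp_swap_yz {x y z : ℕ} (hxy : x ≠ y) (hxz : x ≠ z) (hyz : y ≠ z) :
    Qp x y z ↔ ¬ Qp x z y := by
  simp only [Qp, Xor', xor_def, QBtw]; omega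

def i01 (a b : ℕ) : ℕ := if b < a then 1 else 0

lemma i01_flip {a b : ℕ} (h : a ≠ b) : i01 a b + i01 b a = 1 := by
  unfold i01; split_ifs <;> omega

def ev4 (a b c d : ℕ) : Prop :=
  (i01 a b + i01 a c + i01 a d + i01 b c + i01 b d + i01 c d) % 2 = 0

def ev3 (a b c : ℕ) : Prop := (i01 a b + i01 a c + i01 b c) % 2 = 0

lemma ev4_swap12 {a b c d : ℕ} (h : a ≠ b) : ev4 a b c d ↔ ¬ ev4 b a c d := by
  have := i01_flip h; unfold ev4; omega

lemma ev4_swap23 {a b c d : ℕ} (h : b ≠ c) : ev4 a b c d ↔ ¬ ev4 a c b d := by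
  have := i01_flip h; unfold ev4; omega

lemma ev4_swap34 {a b c d : ℕ} (h : c ≠ d) : ev4 a b c d ↔ ¬ ev4 a b d c := by
  have := i01_flip h; unfold ev4; omega

lemma ev3_swap12 {a b c : ℕ} (h : a ≠ b) : ev3 a b c ↔ ¬ ev3 b a c := by
  have := i01_flip h; unfold ev3; omega

lemma ev3_swap23 {a b c : ℕ} (h : b ≠ c) : ev3 a b c ↔ ¬ ev3 a c b := by
  have := i01_flip h; unfold ev3; omega

/-! ### slot values -/

def gv (m : ℕ) (σ : Equiv.Perm (Fin m)) (p : ℕ) : ℕ :=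
  if h : p < m then (σ ⟨p, h⟩ : ℕ) else m + p

lemma gv_lt (m : ℕ) (σ : Equiv.Perm (Fin m)) {p : ℕ} (h : p < m) : gv m σ p < m := by
  simp only [gv, dif_pos h]; exact (σ ⟨p, h⟩).isLt

lemma gv_inj (m : ℕ) (σ : Equiv.Perm (Fin m)) {p q : ℕ} (hp : p < m) (hq : q < m)
    (h : gv m σ p = gv m σ q) : p = q := by
  simp only [gv, dif_pos hp, dif_pos hq] at h
  have := σ.injective (Fin.val_injective h)
  exact congrArg Fin.val this

lemma gv_ne (m : ℕ) (σ : Equiv.Perm (Fin m)) {p q : ℕ} (hp : p < m) (hq : q < m)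
    (h : p ≠ q) : gv m σ p ≠ gv m σ q := fun hc => h (gv_inj m σ hp hq hc)

lemma gv_surj (m : ℕ) (σ : Equiv.Perm (Fin m)) {v : ℕ} (hv : v < m) :
    ∃ p, p < m ∧ gv m σ p = v := by
  refine ⟨(σ.symm ⟨v, hv⟩ : ℕ), (σ.symm ⟨v, hv⟩).isLt, ?_⟩
  simp [gv, (σ.symm ⟨v, hv⟩).isLt]

lemma gv_ext (m : ℕ) {σ τ : Equiv.Perm (Fin m)} (h : ∀ p < m, gv m σ p = gv m τ p) :
    σ = τ := by
  ext x
  have := h x.val x.isLt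
  simpa [gv, x.isLt] using this

/-! ### the path permutation -/

def pfN (m : ℕ) (σ : Equiv.Perm (Fin m)) (p : ℕ) : ℕ :=
  if p % 2 = 1 ∧ p < 2*m then gv m σ ((p-1)/2) else m + (p+1)/2

lemma pfN_odd (m : ℕ) (σ : Equiv.Perm (Fin m)) {j : ℕ} (hj : j < m) :
    pfN m σ (2*j+1) = gv m σ j := by
  unfold pfN
  rw [if_pos ⟨by omega, by omega⟩]
  congr 1
  omega

lemma pfN_even (m : ℕ) (σ : Equiv.Perm (Fin m)) (i : ℕ) : pfN m σ (2*i) = m + i := by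
  unfold pfN
  rw [if_neg (by omega)]
  omega

lemma pfN_lt (n m : ℕ) (σ : Equiv.Perm (Fin m)) (hn1 : 2*m+1 ≤ n) (hn2 : n ≤ 2*m+2)
    {p : ℕ} (hp : p < n) : pfN m σ p < n := by
  unfold pfN
  split_ifs with h
  · exact lt_of_lt_of_le (gv_lt m σ (by omega)) (by omega)
  · omega

lemma pfN_inj (n m : ℕ) (σ : Equiv.Perm (Fin m)) (hn1 : 2*m+1 ≤ n) (hn2 : n ≤ 2*m+2)
    {p q : ℕ} (hp : p < n) (hq : q < n) (h : pfN m σ p = pfN m σ q) : p = q := by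
  unfold pfN at h
  split_ifs at h with h1 h2 h2
  · have := gv_inj m σ (p := (p-1)/2) (q := (q-1)/2) (by omega) (by omega) h
    omega
  · have := gv_lt m σ (p := (p-1)/2) (by omega); omega
  · have := gv_lt m σ (p := (q-1)/2) (by omega); omega
  · omega

def pfFin (n m : ℕ) (σ : Equiv.Perm (Fin m)) (p : Fin n) : Fin n :=
  if h : pfN m σ p.val < n then ⟨_, h⟩ else p

noncomputable def Pperm (n m : ℕ) (σ : Equiv.Perm (Fin m)) : Equiv.Perm (Fin n) :=
  if h : Function.Injective (pfFin n m σ) then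
    Equiv.ofBijective _ (Finite.injective_iff_bijective.mp h) else 1

lemma pfFin_inj (n m : ℕ) (σ : Equiv.Perm (Fin m)) (hn1 : 2*m+1 ≤ n) (hn2 : n ≤ 2*m+2) :
    Function.Injective (pfFin n m σ) := by
  intro p q h
  unfold pfFin at h
  rw [dif_pos (pfN_lt n m σ hn1 hn2 p.isLt), dif_pos (pfN_lt n m σ hn1 hn2 q.isLt)] at h
  exact Fin.ext (pfN_inj n m σ hn1 hn2 p.isLt q.isLt (congrArg Fin.val h))

lemma Pperm_at (n m : ℕ) (σ : Equiv.Perm (Fin m)) (hn1 : 2*m+1 ≤ n) (hn2 : n ≤ 2*m+2)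
    (p : Fin n) : (Pperm n m σ p : ℕ) = pfN m σ p.val := by
  rw [Pperm, dif_pos (pfFin_inj n m σ hn1 hn2)]
  show ((pfFin n m σ p : Fin n) : ℕ) = _
  rw [pfFin, dif_pos (pfN_lt n m σ hn1 hn2 p.isLt)]

/-! ### edge filters -/

lemma mem_hamPathEdges (n : ℕ) (σ : Equiv.Perm (Fin n)) (e : Sym2 (Fin n)) :
    e ∈ hamPathEdges n σ ↔ ∃ i : ℕ, ∃ h : i + 1 < n,
      e = s(σ ⟨i, by omega⟩, σ ⟨i+1, h⟩) := by
  unfold hamPathEdges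
  simp only [Finset.mem_image, Finset.mem_univ, true_and]
  constructor
  · rintro ⟨⟨⟨i, hi⟩, hp⟩, rfl⟩
    exact ⟨i, hp, rfl⟩
  · rintro ⟨i, h, rfl⟩
    exact ⟨⟨⟨i, by omega⟩, h⟩, rfl⟩

lemma fin_mk_eq {n a b : ℕ} (ha : a < n) (hb : b < n) (h : a = b) :
    (⟨a, ha⟩ : Fin n) = ⟨b, hb⟩ := Fin.ext h

lemma fin_mk_eq' {n a : ℕ} (ha : a < n) (x : Fin n) (h : a = x.val) :
    (⟨a, ha⟩ : Fin n) = x := Fin.ext h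

lemma fin_ne_of_val {k : ℕ} {x y : Fin k} (h : (x : ℕ) ≠ (y : ℕ)) : x ≠ y :=
  fun he => h (congrArg Fin.val he)

lemma filter_interior (n : ℕ) (σ : Equiv.Perm (Fin n)) (i : ℕ) (h0 : 0 < i) (h1 : i + 1 < n) :
    (hamPathEdges n σ).filter (fun e => σ ⟨i, by omega⟩ ∈ e) =
      {s(σ ⟨i, by omega⟩, σ ⟨i-1, by omega⟩), s(σ ⟨i, by omega⟩, σ ⟨i+1, h1⟩)} := by
  ext e
  simp only [Finset.mem_filter, mem_hamPathEdges, Finset.mem_insert, Finset.mem_singleton]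
  constructor
  · rintro ⟨⟨j, hj, rfl⟩, hv⟩
    rw [Sym2.mem_iff] at hv
    rcases hv with hv | hv
    · have hji : i = j := congrArg Fin.val (σ.injective hv)
      right
      rw [Sym2.eq_iff]
      exact Or.inl ⟨congrArg σ (fin_mk_eq _ _ hji.symm), congrArg σ (fin_mk_eq _ _ (by omega))⟩
    · have hji : i = j + 1 := congrArg Fin.val (σ.injective hv)
      left
      rw [Sym2.eq_iff]
      exact Or.inr ⟨congrArg σ (fin_mk_eq _ _ (by omega)), congrArg σ (fin_mk_eq _ _ (by omega))⟩
  · rintro (rfl | rfl)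
    · refine ⟨⟨i-1, by omega, ?_⟩, by rw [Sym2.mem_iff]; left; rfl⟩
      rw [Sym2.eq_iff]
      exact Or.inr ⟨congrArg σ (fin_mk_eq _ _ (by omega)), congrArg σ (fin_mk_eq _ _ (by omega))⟩
    · exact ⟨⟨i, h1, rfl⟩, by rw [Sym2.mem_iff]; left; rfl⟩

lemma filter_card_le_two (n : ℕ) (σ : Equiv.Perm (Fin n)) (v : Fin n) :
    ((hamPathEdges n σ).filter (fun e => v ∈ e)).card ≤ 2 := by
  classical
  obtain ⟨i, hv⟩ : ∃ i : Fin n, v = σ i := ⟨σ.symm v, by simp⟩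
  have hne : (1 : ℕ) ≤ n := by have := i.isLt; omega
  have hsub : (hamPathEdges n σ).filter (fun e => v ∈ e) ⊆
      {s(σ ⟨min (i.val+1) (n-1), by omega⟩, σ i), s(σ i, σ ⟨i.val - 1, by omega⟩)} := by
    intro e he
    simp only [Finset.mem_filter, mem_hamPathEdges] at he
    obtain ⟨⟨j, hj, rfl⟩, hv2⟩ := he
    rw [Sym2.mem_iff] at hv2
    simp only [Finset.mem_insert, Finset.mem_singleton]
    rcases hv2 with h | h
    · have hji : j = i.val := congrArg Fin.val (σ.injective (h.symm.trans hv))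
      left
      rw [Sym2.eq_iff]
      exact Or.inr ⟨congrArg σ (fin_mk_eq' _ _ hji), congrArg σ (fin_mk_eq _ _ (by omega))⟩
    · have hji : j + 1 = i.val := congrArg Fin.val (σ.injective (h.symm.trans hv))
      right
      rw [Sym2.eq_iff]
      exact Or.inr ⟨congrArg σ (fin_mk_eq _ _ (by omega)), congrArg σ (fin_mk_eq' _ _ hji)⟩
  calc ((hamPathEdges n σ).filter (fun e => v ∈ e)).card ≤ _ := Finset.card_le_card hsub
    _ ≤ 2 := (Finset.card_insert_le _ _).trans (by simp)

lemma crossing_of (n : ℕ) (E₁ E₂ : Finset (Sym2 (Fin n))) (v a b c d : Fin n)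
    (h1 : E₁.filter (fun e => v ∈ e) = {s(v,a), s(v,b)})
    (h2 : E₂.filter (fun e => v ∈ e) = {s(v,c), s(v,d)})
    (hab : a ≠ b) (hcd : c ≠ d) (hac : a ≠ c) (had : a ≠ d) (hbc : b ≠ c) (hbd : b ≠ d)
    (hva : v ≠ a) (hvb : v ≠ b) (hvc : v ≠ c) (hvd : v ≠ d) :
    Crossing n E₁ E₂ := by
  classical
  refine ⟨v, ?_⟩
  rw [Finset.filter_union, h1, h2]
  have key : ∀ x y : Fin n, v ≠ x → v ≠ y → x ≠ y → s(v,x) ≠ s(v,y) := by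
    intro x y hvx hvy hxy h
    rw [Sym2.eq_iff] at h
    rcases h with ⟨_, h⟩ | ⟨h, _⟩ <;> tauto
  have huni : ({s(v,a), s(v,b)} ∪ {s(v,c), s(v,d)} : Finset (Sym2 (Fin n))) =
      {s(v,a), s(v,b), s(v,c), s(v,d)} := by
    ext e; simp only [Finset.mem_union, Finset.mem_insert, Finset.mem_singleton]; tauto
  rw [huni]
  rw [Finset.card_insert_of_notMem, Finset.card_insert_of_notMem,
      Finset.card_insert_of_notMem, Finset.card_singleton]
  · simp only [Finset.mem_singleton]
    exact key c d hvc hvd hcd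
  · simp only [Finset.mem_insert, Finset.mem_singleton]
    push_neg
    exact ⟨key b c hvb hvc hbc, key b d hvb hvd hbd⟩
  · simp only [Finset.mem_insert, Finset.mem_singleton]
    push_neg
    exact ⟨key a b hva hvb hab, key a c hva hvc hac, key a d hva hvd had⟩
def memA (m : ℕ) (σ : Equiv.Perm (Fin m)) : Prop :=
  (m % 4 = 2 → gv m σ 0 < gv m σ 1) ∧
  (m % 4 = 3 → ev3 (gv m σ 0) (gv m σ 1) (gv m σ 2)) ∧
  (∀ i < m / 4, ev4 (gv m σ (m%4+4*i)) (gv m σ (m%4+4*i+1))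
      (gv m σ (m%4+4*i+2)) (gv m σ (m%4+4*i+3))) ∧
  (∀ i < m / 4, 1 ≤ m%4+4*i → Qp (gv m σ (m%4+4*i-1)) (gv m σ (m%4+4*i))
      (gv m σ (m%4+4*i+1)))

lemma Pperm_val_odd (n m : ℕ) (σ : Equiv.Perm (Fin m)) (hn1 : 2*m+1 ≤ n) (hn2 : n ≤ 2*m+2)
    {p j : ℕ} (hp : p < n) (he : p = 2*j+1) (hj : j < m) :
    ((Pperm n m σ ⟨p, hp⟩ : Fin n) : ℕ) = gv m σ j := by
  rw [Pperm_at n m σ hn1 hn2]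
  show pfN m σ p = _
  subst he; exact pfN_odd m σ hj

lemma Pperm_val_even (n m : ℕ) (σ : Equiv.Perm (Fin m)) (hn1 : 2*m+1 ≤ n) (hn2 : n ≤ 2*m+2)
    {p i : ℕ} (hp : p < n) (he : p = 2*i) :
    ((Pperm n m σ ⟨p, hp⟩ : Fin n) : ℕ) = m + i := by
  rw [Pperm_at n m σ hn1 hn2]
  show pfN m σ p = _
  subst he; exact pfN_even m σ i

theorem crossA (n m : ℕ) (hn1 : 2*m+1 ≤ n) (hn2 : n ≤ 2*m+2)
    (σ τ : Equiv.Perm (Fin m)) (hσ : memA m σ) (hτ : memA m τ) (hst : σ ≠ τ) :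
    Crossing n (hamPathEdges n (Pperm n m σ)) (hamPathEdges n (Pperm n m τ)) := by
  classical
  by_contra hnc
  -- ## rigidity for slot values
  have rigGen : ∀ j j' : ℕ, j < m → j' < m → gv m σ j = gv m τ j' →
      j' ≤ j + 1 ∧ j ≤ j' + 1 := by
    intro j j' hj hj' heq
    by_contra hc
    apply hnc
    have h1 := filter_interior n (Pperm n m σ) (2*j+1) (by omega) (by omega)
    have h2 := filter_interior n (Pperm n m τ) (2*j'+1) (by omega) (by omega)
    have hveq : (Pperm n m τ) ⟨2*j'+1, by omega⟩ = (Pperm n m σ) ⟨2*j+1, by omega⟩ := by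
      apply Fin.ext
      rw [Pperm_val_odd n m τ hn1 hn2 _ rfl hj', Pperm_val_odd n m σ hn1 hn2 _ rfl hj, heq]
    rw [hveq] at h2
    refine crossing_of n _ _ _ _ _ _ _ h1 h2 ?_ ?_ ?_ ?_ ?_ ?_ ?_ ?_ ?_ ?_ <;>
      apply fin_ne_of_val
    · rw [Pperm_val_even n m σ hn1 hn2 _ (by omega : 2*j+1-1 = 2*j),
        Pperm_val_even n m σ hn1 hn2 _ (by omega : 2*j+1+1 = 2*(j+1))]
      omega
    · rw [Pperm_val_even n m τ hn1 hn2 _ (by omega : 2*j'+1-1 = 2*j'),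
        Pperm_val_even n m τ hn1 hn2 _ (by omega : 2*j'+1+1 = 2*(j'+1))]
      omega
    · rw [Pperm_val_even n m σ hn1 hn2 _ (by omega : 2*j+1-1 = 2*j),
        Pperm_val_even n m τ hn1 hn2 _ (by omega : 2*j'+1-1 = 2*j')]
      omega
    · rw [Pperm_val_even n m σ hn1 hn2 _ (by omega : 2*j+1-1 = 2*j),
        Pperm_val_even n m τ hn1 hn2 _ (by omega : 2*j'+1+1 = 2*(j'+1))]
      omega
    · rw [Pperm_val_even n m σ hn1 hn2 _ (by omega : 2*j+1+1 = 2*(j+1)),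
        Pperm_val_even n m τ hn1 hn2 _ (by omega : 2*j'+1-1 = 2*j')]
      omega
    · rw [Pperm_val_even n m σ hn1 hn2 _ (by omega : 2*j+1+1 = 2*(j+1)),
        Pperm_val_even n m τ hn1 hn2 _ (by omega : 2*j'+1+1 = 2*(j'+1))]
      omega
    · rw [Pperm_val_odd n m σ hn1 hn2 _ rfl hj,
        Pperm_val_even n m σ hn1 hn2 _ (by omega : 2*j+1-1 = 2*j)]
      have := gv_lt m σ hj; omega
    · rw [Pperm_val_odd n m σ hn1 hn2 _ rfl hj,
        Pperm_val_even n m σ hn1 hn2 _ (by omega : 2*j+1+1 = 2*(j+1))]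
      have := gv_lt m σ hj; omega
    · rw [Pperm_val_odd n m σ hn1 hn2 _ rfl hj,
        Pperm_val_even n m τ hn1 hn2 _ (by omega : 2*j'+1-1 = 2*j')]
      have := gv_lt m σ hj; omega
    · rw [Pperm_val_odd n m σ hn1 hn2 _ rfl hj,
        Pperm_val_even n m τ hn1 hn2 _ (by omega : 2*j'+1+1 = 2*(j'+1))]
      have := gv_lt m σ hj; omega
  -- ## rigidity at the fixed vertices
  have rig2 : ∀ i : ℕ, i + 1 < m →
      gv m σ i = gv m τ i ∨ gv m σ i = gv m τ (i+1) ∨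
      gv m σ (i+1) = gv m τ i ∨ gv m σ (i+1) = gv m τ (i+1) := by
    intro i hi
    by_contra hc
    push_neg at hc
    obtain ⟨c1, c2, c3, c4⟩ := hc
    apply hnc
    have h1 := filter_interior n (Pperm n m σ) (2*(i+1)) (by omega) (by omega)
    have h2 := filter_interior n (Pperm n m τ) (2*(i+1)) (by omega) (by omega)
    have hveq : (Pperm n m τ) ⟨2*(i+1), by omega⟩ = (Pperm n m σ) ⟨2*(i+1), by omega⟩ := by
      apply Fin.ext
      rw [Pperm_val_even n m τ hn1 hn2 _ rfl, Pperm_val_even n m σ hn1 hn2 _ rfl]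
    rw [hveq] at h2
    refine crossing_of n _ _ _ _ _ _ _ h1 h2 ?_ ?_ ?_ ?_ ?_ ?_ ?_ ?_ ?_ ?_ <;>
      apply fin_ne_of_val
    · rw [Pperm_val_odd n m σ hn1 hn2 _ (by omega : 2*(i+1)-1 = 2*i+1) (by omega),
        Pperm_val_odd n m σ hn1 hn2 _ (by omega : 2*(i+1)+1 = 2*(i+1)+1) (by omega)]
      exact gv_ne m σ (by omega) (by omega) (by omega)
    · rw [Pperm_val_odd n m τ hn1 hn2 _ (by omega : 2*(i+1)-1 = 2*i+1) (by omega),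
        Pperm_val_odd n m τ hn1 hn2 _ (by omega : 2*(i+1)+1 = 2*(i+1)+1) (by omega)]
      exact gv_ne m τ (by omega) (by omega) (by omega)
    · rw [Pperm_val_odd n m σ hn1 hn2 _ (by omega : 2*(i+1)-1 = 2*i+1) (by omega),
        Pperm_val_odd n m τ hn1 hn2 _ (by omega : 2*(i+1)-1 = 2*i+1) (by omega)]
      exact c1
    · rw [Pperm_val_odd n m σ hn1 hn2 _ (by omega : 2*(i+1)-1 = 2*i+1) (by omega),
        Pperm_val_odd n m τ hn1 hn2 _ (by omega : 2*(i+1)+1 = 2*(i+1)+1) (by omega)]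
      exact c2
    · rw [Pperm_val_odd n m σ hn1 hn2 _ (by omega : 2*(i+1)+1 = 2*(i+1)+1) (by omega),
        Pperm_val_odd n m τ hn1 hn2 _ (by omega : 2*(i+1)-1 = 2*i+1) (by omega)]
      exact c3
    · rw [Pperm_val_odd n m σ hn1 hn2 _ (by omega : 2*(i+1)+1 = 2*(i+1)+1) (by omega),
        Pperm_val_odd n m τ hn1 hn2 _ (by omega : 2*(i+1)+1 = 2*(i+1)+1) (by omega)]
      exact c4
    · rw [Pperm_val_even n m σ hn1 hn2 _ rfl,
        Pperm_val_odd n m σ hn1 hn2 _ (by omega : 2*(i+1)-1 = 2*i+1) (by omega)]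
      have := gv_lt m σ (p := i) (by omega); omega
    · rw [Pperm_val_even n m σ hn1 hn2 _ rfl,
        Pperm_val_odd n m σ hn1 hn2 _ (by omega : 2*(i+1)+1 = 2*(i+1)+1) (by omega)]
      have := gv_lt m σ (p := i+1) (by omega); omega
    · rw [Pperm_val_even n m σ hn1 hn2 _ rfl,
        Pperm_val_odd n m τ hn1 hn2 _ (by omega : 2*(i+1)-1 = 2*i+1) (by omega)]
      have := gv_lt m τ (p := i) (by omega); omega
    · rw [Pperm_val_even n m σ hn1 hn2 _ rfl,
        Pperm_val_odd n m τ hn1 hn2 _ (by omega : 2*(i+1)+1 = 2*(i+1)+1) (by omega)]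
      have := gv_lt m τ (p := i+1) (by omega); omega
  -- ## the set of disagreeing slots
  set S : Finset ℕ := (Finset.range m).filter (fun p => gv m τ p ≠ gv m σ p) with hSdef
  have hSne : S.Nonempty := by
    by_contra h
    apply hst
    apply gv_ext
    intro p hp
    by_contra hne
    exact h ⟨p, Finset.mem_filter.mpr ⟨Finset.mem_range.mpr hp, fun hc => hne hc.symm⟩⟩
  set p₀ : ℕ := S.min' hSne with hp₀def
  have hp₀S := S.min'_mem hSne
  rw [Finset.mem_filter, Finset.mem_range] at hp₀S
  obtain ⟨hp₀m, hp₀ne⟩ := hp₀S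
  have hstabL : ∀ q, q < p₀ → gv m τ q = gv m σ q := by
    intro q hq
    by_contra h
    have hqS : q ∈ S := Finset.mem_filter.mpr ⟨Finset.mem_range.mpr (by omega), h⟩
    have := S.min'_le q hqS
    omega
  -- ## swap extraction
  have ext2 : ∀ p, p < m → gv m τ p ≠ gv m σ p →
      (p = 0 ∨ (gv m σ (p-1) ≠ gv m τ p ∧ gv m τ (p-1) ≠ gv m σ p)) →
      p + 1 < m ∧ gv m τ p = gv m σ (p+1) ∧ gv m τ (p+1) = gv m σ p := by
    intro p hp hne hguard
    obtain ⟨q, hq, hqe⟩ := gv_surj m τ (gv_lt m σ hp)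
    have hb1 := rigGen p q hp hq hqe.symm
    have hq0 : q ≠ p := fun h => hne (h ▸ hqe)
    have hqp : q = p + 1 := by
      rcases hguard with rfl | ⟨g1, g2⟩
      · omega
      · have hq1 : q ≠ p - 1 := fun h => g2 (by rw [← h]; exact hqe)
        omega
    obtain ⟨r, hr, hre⟩ := gv_surj m σ (gv_lt m τ hp)
    have hb2 := rigGen r p hr hp hre
    have hr0 : r ≠ p := fun h => hne ((h ▸ hre).symm)
    have hrp : r = p + 1 := by
      rcases hguard with rfl | ⟨g1, g2⟩
      · omega
      · have hr1 : r ≠ p - 1 := fun h => g1 (by rw [← h]; exact hre)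
        omega
    exact ⟨by omega, by rw [← hrp]; exact hre.symm, by rw [← hqp]; exact hqe⟩
  -- ## after a swap at p, slot p+2 is unchanged
  have nextStable : ∀ p, p + 1 < m → gv m τ p = gv m σ (p+1) → gv m τ (p+1) = gv m σ p →
      p + 2 < m → gv m τ (p+2) = gv m σ (p+2) := by
    intro p hp1 ha hb hp2
    by_contra hne2
    have hg1 : gv m σ (p+2-1) ≠ gv m τ (p+2) := by
      have e : p+2-1 = p+1 := by omega
      rw [e]
      intro hc
      have : gv m τ p = gv m τ (p+2) := by rw [ha, hc]
      have := gv_inj m τ (by omega) hp2 this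
      omega
    have hg2 : gv m τ (p+2-1) ≠ gv m σ (p+2) := by
      have e : p+2-1 = p+1 := by omega
      rw [e, hb]
      exact gv_ne m σ (by omega) hp2 (by omega)
    obtain ⟨hp3m, hxa, hxb⟩ := ext2 (p+2) hp2 hne2 (Or.inr ⟨hg1, hg2⟩)
    rcases rig2 (p+1) (by omega) with h | h | h | h
    · rw [hb] at h
      have := gv_inj m σ (by omega) (by omega) h
      omega
    · rw [hxa] at h
      have := gv_inj m σ (by omega) (by omega) h
      omega
    · rw [hb] at h
      have := gv_inj m σ (by omega) (by omega) h
      omega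
    · exact hne2 h.symm
  -- ## the swap at p₀
  have hguard₀ : p₀ = 0 ∨ (gv m σ (p₀-1) ≠ gv m τ p₀ ∧ gv m τ (p₀-1) ≠ gv m σ p₀) := by
    rcases Nat.eq_zero_or_pos p₀ with h | h
    · left; exact h
    · right
      have hs := hstabL (p₀-1) (by omega)
      constructor
      · intro hc
        have := gv_inj m τ (p := p₀-1) (q := p₀) (by omega) hp₀m (by rw [hs, hc])
        omega
      · intro hc
        have := gv_inj m σ (p := p₀-1) (q := p₀) (by omega) hp₀m (by rw [← hs, hc])
        omega
  obtain ⟨hp₀1, hsw0a, hsw0b⟩ := ext2 p₀ hp₀m hp₀ne hguard₀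
  have hstab2 : p₀ + 2 < m → gv m τ (p₀+2) = gv m σ (p₀+2) :=
    nextStable p₀ hp₀1 hsw0a hsw0b
  -- ## case analysis on the junction type of p₀
  by_cases hL : p₀ + 1 < m % 4
  · -- inside the leftover block
    have h23 : m % 4 = 2 ∨ m % 4 = 3 := by
      have : m % 4 < 4 := Nat.mod_lt _ (by norm_num)
      omega
    rcases h23 with h2 | h3
    · have hp0 : p₀ = 0 := by omega
      have hσs := hσ.1 h2
      have hτs := hτ.1 h2
      rw [hp0] at hsw0a hsw0b
      norm_num at hsw0a hsw0b
      omega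
    · have hm3 : 3 ≤ m := by omega
      have hσe := hσ.2.1 h3
      have hτe := hτ.2.1 h3
      rcases (by omega : p₀ = 0 ∨ p₀ = 1) with hp0 | hp0
      · rw [hp0] at hsw0a hsw0b hstab2
        have hz := hstab2 (by omega)
        norm_num at hsw0a hsw0b hz
        rw [hsw0a, hsw0b, hz] at hτe
        exact ((ev3_swap12 (gv_ne m σ (by omega) (by omega) (by omega))).mp hσe) hτe
      · rw [hp0] at hsw0a hsw0b
        have h0 := hstabL 0 (by omega)
        norm_num at hsw0a hsw0b
        rw [hsw0a, hsw0b, h0] at hτe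
        exact ((ev3_swap23 (gv_ne m σ (by omega) (by omega) (by omega))).mp hσe) hτe
  · by_cases hB : m % 4 ≤ p₀ + 1 ∧ (p₀ + 1 - m % 4) % 4 = 0
    · -- boundary junction at p₀
      obtain ⟨j, hjK, hjb⟩ : ∃ j, j < m/4 ∧ m%4 + 4*j = p₀+1 :=
        ⟨(p₀+1-m%4)/4, by omega, by omega⟩
      have hz : gv m τ (p₀+2) = gv m σ (p₀+2) := hstab2 (by omega)
      have hQσ := hσ.2.2.2 j hjK (by omega)
      have hQτ := hτ.2.2.2 j hjK (by omega)
      rw [hjb] at hQσ hQτ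
      have e1 : p₀+1-1 = p₀ := by omega
      have e2 : p₀+1+1 = p₀+2 := by omega
      rw [e1, e2] at hQσ hQτ
      rw [hsw0a, hsw0b, hz] at hQτ
      exact ((Qp_swap_xy (gv_ne m σ (by omega) (by omega) (by omega))).mp hQσ) hQτ
    · -- within a 4-block
      have hge : m % 4 ≤ p₀ ∧ (p₀ - m % 4) % 4 ≠ 3 := by
        constructor
        · rcases Nat.eq_or_lt_of_le (by omega : m%4 ≤ p₀+1) with h | h
          · exact absurd ⟨by omega, by omega⟩ hB
          · omega
        · intro h3
          exact hB ⟨by omega, by omega⟩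
      rcases (by omega : (p₀ - m%4) % 4 = 0 ∨ (p₀ - m%4) % 4 = 1 ∨ (p₀ - m%4) % 4 = 2)
        with ht0 | ht1 | ht2
      · -- swap at the first junction of a block
        obtain ⟨i, hiK, hib⟩ : ∃ i, i < m/4 ∧ m%4 + 4*i = p₀ :=
          ⟨(p₀-m%4)/4, by omega, by omega⟩
        have hb3 : p₀ + 3 < m := by omega
        have hz := hstab2 (by omega)
        have hEσ := hσ.2.2.1 i hiK
        have hEτ := hτ.2.2.1 i hiK
        rw [hib] at hEσ hEτ
        by_cases hp3 : gv m τ (p₀+3) = gv m σ (p₀+3)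
        · rw [hsw0a, hsw0b, hz, hp3] at hEτ
          exact ((ev4_swap12 (gv_ne m σ (by omega) (by omega) (by omega))).mp hEσ) hEτ
        · have hg1 : gv m σ (p₀+3-1) ≠ gv m τ (p₀+3) := by
            have e : p₀+3-1 = p₀+2 := by omega
            rw [e]
            intro hc
            have h' : gv m τ (p₀+2) = gv m τ (p₀+3) := by rw [hz, hc]
            have := gv_inj m τ (by omega) (by omega) h'
            omega
          have hg2 : gv m τ (p₀+3-1) ≠ gv m σ (p₀+3) := by
            have e : p₀+3-1 = p₀+2 := by omega
            rw [e, hz]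
            exact gv_ne m σ (by omega) (by omega) (by omega)
          obtain ⟨hp4m, hxa, hxb⟩ := ext2 (p₀+3) (by omega) hp3 (Or.inr ⟨hg1, hg2⟩)
          have hiK1 : i + 1 < m/4 := by omega
          have hz2 : gv m τ (p₀+5) = gv m σ (p₀+5) :=
            nextStable (p₀+3) (by omega) hxa hxb (by omega)
          have hQσ := hσ.2.2.2 (i+1) hiK1 (by omega)
          have hQτ := hτ.2.2.2 (i+1) hiK1 (by omega)
          have hib2 : m%4 + 4*(i+1) = p₀+4 := by omega
          rw [hib2] at hQσ hQτ
          have e1 : p₀+4-1 = p₀+3 := by omega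
          have e2 : p₀+4+1 = p₀+5 := by omega
          rw [e1, e2] at hQσ hQτ
          rw [hxa, hxb, hz2] at hQτ
          exact ((Qp_swap_xy (gv_ne m σ (by omega) (by omega) (by omega))).mp hQσ) hQτ
      · -- swap at the middle junction of a block
        obtain ⟨i, hiK, hib⟩ : ∃ i, i < m/4 ∧ m%4 + 4*i = p₀-1 :=
          ⟨(p₀-1-m%4)/4, by omega, by omega⟩
        have hb3 : p₀ + 2 < m := by omega
        have hz := hstab2 (by omega)
        have hL0 := hstabL (p₀-1) (by omega)
        have hEσ := hσ.2.2.1 i hiK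
        have hEτ := hτ.2.2.1 i hiK
        rw [hib] at hEσ hEτ
        have e1 : p₀-1+1 = p₀ := by omega
        have e2 : p₀-1+2 = p₀+1 := by omega
        have e3 : p₀-1+3 = p₀+2 := by omega
        rw [e1, e2, e3] at hEσ hEτ
        rw [hL0, hsw0a, hsw0b, hz] at hEτ
        exact ((ev4_swap23 (gv_ne m σ (by omega) (by omega) (by omega))).mp hEσ) hEτ
      · -- swap at the last junction of a block
        obtain ⟨i, hiK, hib⟩ : ∃ i, i < m/4 ∧ m%4 + 4*i = p₀-2 :=
          ⟨(p₀-2-m%4)/4, by omega, by omega⟩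
        have hL0 := hstabL (p₀-2) (by omega)
        have hL1 := hstabL (p₀-1) (by omega)
        have hEσ := hσ.2.2.1 i hiK
        have hEτ := hτ.2.2.1 i hiK
        rw [hib] at hEσ hEτ
        have e1 : p₀-2+1 = p₀-1 := by omega
        have e2 : p₀-2+2 = p₀ := by omega
        have e3 : p₀-2+3 = p₀+1 := by omega
        rw [e1, e2, e3] at hEσ hEτ
        rw [hL0, hL1, hsw0a, hsw0b] at hEτ
        exact ((ev4_swap34 (gv_ne m σ (by omega) (by omega) (by omega))).mp hEσ) hEτ

/-! ### counting -/

def nswap (m a b : ℕ) : Equiv.Perm (Fin m) :=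
  if ha : a < m then if hb : b < m then Equiv.swap ⟨a, ha⟩ ⟨b, hb⟩ else 1 else 1

lemma gv_mul_nswap_other (m : ℕ) (σ : Equiv.Perm (Fin m)) (a b p : ℕ)
    (h1 : p ≠ a) (h2 : p ≠ b) : gv m (σ * nswap m a b) p = gv m σ p := by
  by_cases hp : p < m
  · unfold nswap
    split_ifs with ha hb
    · simp only [gv, dif_pos hp, Equiv.Perm.mul_apply]
      rw [Equiv.swap_apply_of_ne_of_ne (fun h => h1 (congrArg Fin.val h))
        (fun h => h2 (congrArg Fin.val h))]
    · simp
    · simp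
  · simp only [gv, dif_neg hp, Equiv.Perm.mul_apply]

lemma gv_mul_nswap_left (m : ℕ) (σ : Equiv.Perm (Fin m)) (a b : ℕ) (ha : a < m) (hb : b < m) :
    gv m (σ * nswap m a b) a = gv m σ b := by
  unfold nswap
  rw [dif_pos ha, dif_pos hb]
  simp only [gv, dif_pos ha, dif_pos hb, Equiv.Perm.mul_apply, Equiv.swap_apply_left]

lemma gv_mul_nswap_right (m : ℕ) (σ : Equiv.Perm (Fin m)) (a b : ℕ) (ha : a < m) (hb : b < m) :
    gv m (σ * nswap m a b) b = gv m σ a := by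
  unfold nswap
  rw [dif_pos ha, dif_pos hb]
  simp only [gv, dif_pos ha, dif_pos hb, Equiv.Perm.mul_apply, Equiv.swap_apply_right]

lemma nswap_mul_self (m a b : ℕ) : nswap m a b * nswap m a b = 1 := by
  unfold nswap
  split_ifs <;> simp [Equiv.swap_mul_self]

def condL (m : ℕ) (σ : Equiv.Perm (Fin m)) : Prop :=
  (m % 4 = 2 → gv m σ 0 < gv m σ 1) ∧
  (m % 4 = 3 → ev3 (gv m σ 0) (gv m σ 1) (gv m σ 2))

def condE (m i : ℕ) (σ : Equiv.Perm (Fin m)) : Prop :=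
  ev4 (gv m σ (m%4+4*i)) (gv m σ (m%4+4*i+1)) (gv m σ (m%4+4*i+2)) (gv m σ (m%4+4*i+3))

def condQ (m i : ℕ) (σ : Equiv.Perm (Fin m)) : Prop :=
  m%4+4*i = 0 ∨ Qp (gv m σ (m%4+4*i-1)) (gv m σ (m%4+4*i)) (gv m σ (m%4+4*i+1))

lemma memA_iff (m : ℕ) (σ : Equiv.Perm (Fin m)) :
    memA m σ ↔ condL m σ ∧ ∀ i < m/4, condQ m i σ ∧ condE m i σ := by
  unfold memA condL condQ condE
  constructor
  · rintro ⟨h1, h2, h3, h4⟩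
    refine ⟨⟨h1, h2⟩, fun i hi => ⟨?_, h3 i hi⟩⟩
    rcases Nat.eq_zero_or_pos (m%4+4*i) with h | h
    · exact Or.inl h
    · exact Or.inr (h4 i hi h)
  · rintro ⟨⟨h1, h2⟩, h⟩
    exact ⟨h1, h2, fun i hi => (h i hi).2, fun i hi hpos => ((h i hi).1).resolve_left (by omega)⟩

open Classical in
noncomputable def lstep (m : ℕ) (σ : Equiv.Perm (Fin m)) : Equiv.Perm (Fin m) :=
  if condL m σ then σ else σ * nswap m 0 1

open Classical in
noncomputable def qstep (m i : ℕ) (τ : Equiv.Perm (Fin m)) : Equiv.Perm (Fin m) :=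
  if condQ m i τ then τ else τ * nswap m (m%4+4*i) (m%4+4*i+1)

open Classical in
noncomputable def estep (m i : ℕ) (τ : Equiv.Perm (Fin m)) : Equiv.Perm (Fin m) :=
  if condE m i τ then τ else τ * nswap m (m%4+4*i+2) (m%4+4*i+3)

noncomputable def canonB (m : ℕ) (σ : Equiv.Perm (Fin m)) : ℕ → Equiv.Perm (Fin m)
  | 0 => lstep m σ
  | (i+1) => estep m i (qstep m i (canonB m σ i))

lemma ifstep_inj {G : Type*} [Group G] (C : G → Prop) [∀ g, Decidable (C g)] (s : G) {τ τ' : G}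
    (h : (if C τ then τ else τ * s) = (if C τ' then τ' else τ' * s)) (hb : C τ ↔ C τ') :
    τ = τ' := by
  by_cases hC : C τ
  · rwa [if_pos hC, if_pos (hb.mp hC)] at h
  · rw [if_neg hC, if_neg (fun h' => hC (hb.mpr h'))] at h
    exact mul_right_cancel h

lemma gv_qstep_lt (m k : ℕ) (τ : Equiv.Perm (Fin m)) {p : ℕ} (hp : p < m%4+4*k) :
    gv m (qstep m k τ) p = gv m τ p := by
  unfold qstep
  split_ifs with h
  · rfl
  · exact gv_mul_nswap_other m τ _ _ p (by omega) (by omega)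

lemma gv_estep_lt (m k : ℕ) (τ : Equiv.Perm (Fin m)) {p : ℕ} (hp : p < m%4+4*k+2) :
    gv m (estep m k τ) p = gv m τ p := by
  unfold estep
  split_ifs with h
  · rfl
  · exact gv_mul_nswap_other m τ _ _ p (by omega) (by omega)

lemma canonB_stable (m : ℕ) (σ : Equiv.Perm (Fin m)) (i j p : ℕ) (hij : i ≤ j)
    (hp : p < m%4 + 4*i) : gv m (canonB m σ j) p = gv m (canonB m σ i) p := by
  induction j with
  | zero =>
    have h0 : i = 0 := by omega
    rw [h0]
  | succ k ih =>
    rcases Nat.eq_or_lt_of_le hij with h | h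
    · rw [h]
    · have hik : i ≤ k := by omega
      rw [← ih hik]
      show gv m (estep m k (qstep m k (canonB m σ k))) p = _
      rw [gv_estep_lt m k _ (by omega), gv_qstep_lt m k _ (by omega)]

lemma condL_lstep (m : ℕ) (σ : Equiv.Perm (Fin m)) : condL m (lstep m σ) := by
  unfold lstep
  split_ifs with h
  · exact h
  · constructor
    · intro h2
      have hm : 2 ≤ m := by omega
      rw [gv_mul_nswap_left m σ 0 1 (by omega) (by omega),
        gv_mul_nswap_right m σ 0 1 (by omega) (by omega)]
      have hns : ¬ (gv m σ 0 < gv m σ 1) := by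
        intro hs
        exact h ⟨fun _ => hs, fun h3 => absurd h2 (by omega)⟩
      have := gv_ne m σ (p := 0) (q := 1) (by omega) (by omega) (by omega)
      omega
    · intro h3
      have hm : 3 ≤ m := by omega
      rw [gv_mul_nswap_left m σ 0 1 (by omega) (by omega),
        gv_mul_nswap_right m σ 0 1 (by omega) (by omega),
        gv_mul_nswap_other m σ 0 1 2 (by omega) (by omega)]
      have hne : ¬ ev3 (gv m σ 0) (gv m σ 1) (gv m σ 2) := by
        intro hs
        exact h ⟨fun h2 => absurd h3 (by omega), fun _ => hs⟩
      exact (ev3_swap12 (gv_ne m σ (p := 1) (q := 0) (by omega) (by omega) (by omega))).mpr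
        (by simpa using hne)

lemma condQ_qstep (m i : ℕ) (hKi : i < m/4) (τ : Equiv.Perm (Fin m)) :
    condQ m i (qstep m i τ) := by
  unfold qstep
  split_ifs with h
  · exact h
  · have hb : m%4+4*i ≠ 0 ∧
        ¬ Qp (gv m τ (m%4+4*i-1)) (gv m τ (m%4+4*i)) (gv m τ (m%4+4*i+1)) := by
      unfold condQ at h
      push_neg at h
      exact h
    have hb1 : m%4+4*i+1 < m := by omega
    right
    rw [gv_mul_nswap_other m τ _ _ _ (by omega) (by omega),
      gv_mul_nswap_left m τ _ _ (by omega) hb1,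
      gv_mul_nswap_right m τ _ _ (by omega) hb1]
    exact (Qp_swap_yz
      (gv_ne m τ (by omega) (by omega) (by omega))
      (gv_ne m τ (by omega) (by omega) (by omega))
      (gv_ne m τ (by omega) (by omega) (by omega))).mpr hb.2

lemma condQ_estep (m i : ℕ) (τ : Equiv.Perm (Fin m)) (h : condQ m i τ) :
    condQ m i (estep m i τ) := by
  unfold estep
  split_ifs with he
  · exact h
  · rcases h with h | h
    · exact Or.inl h
    · right
      rw [gv_mul_nswap_other m τ _ _ _ (by omega) (by omega),
        gv_mul_nswap_other m τ _ _ _ (by omega) (by omega),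
        gv_mul_nswap_other m τ _ _ _ (by omega) (by omega)]
      exact h

lemma condE_estep (m i : ℕ) (hKi : i < m/4) (τ : Equiv.Perm (Fin m)) :
    condE m i (estep m i τ) := by
  unfold estep
  split_ifs with h
  · exact h
  · unfold condE at h ⊢
    have hb : m%4+4*i+3 < m := by omega
    rw [gv_mul_nswap_other m τ _ _ _ (by omega) (by omega),
      gv_mul_nswap_other m τ _ _ _ (by omega) (by omega),
      gv_mul_nswap_left m τ _ _ (by omega) hb,
      gv_mul_nswap_right m τ _ _ (by omega) hb]
    exact (ev4_swap34 (gv_ne m τ (by omega) (by omega) (by omega))).mpr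
      (by simpa using h)

lemma canonB_memA (m : ℕ) (σ : Equiv.Perm (Fin m)) : memA m (canonB m σ (m/4)) := by
  rw [memA_iff]
  constructor
  · have h0 : condL m (canonB m σ 0) := condL_lstep m σ
    constructor
    · intro h2
      rw [canonB_stable m σ 0 (m/4) 0 (by omega) (by omega),
        canonB_stable m σ 0 (m/4) 1 (by omega) (by omega)]
      exact h0.1 h2
    · intro h3
      rw [canonB_stable m σ 0 (m/4) 0 (by omega) (by omega),
        canonB_stable m σ 0 (m/4) 1 (by omega) (by omega),
        canonB_stable m σ 0 (m/4) 2 (by omega) (by omega)]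
      exact h0.2 h3
  · intro i hi
    have hQ : condQ m i (canonB m σ (i+1)) :=
      condQ_estep m i _ (condQ_qstep m i hi (canonB m σ i))
    have hE : condE m i (canonB m σ (i+1)) := condE_estep m i hi _
    constructor
    · rcases hQ with h | h
      · exact Or.inl h
      · right
        rw [canonB_stable m σ (i+1) (m/4) _ (by omega) (by omega),
          canonB_stable m σ (i+1) (m/4) _ (by omega) (by omega),
          canonB_stable m σ (i+1) (m/4) _ (by omega) (by omega)]
        exact h
    · unfold condE at hE ⊢
      rw [canonB_stable m σ (i+1) (m/4) _ (by omega) (by omega),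
        canonB_stable m σ (i+1) (m/4) _ (by omega) (by omega),
        canonB_stable m σ (i+1) (m/4) _ (by omega) (by omega),
        canonB_stable m σ (i+1) (m/4) _ (by omega) (by omega)]
      exact hE

open Classical in
noncomputable def bitL (m : ℕ) (σ : Equiv.Perm (Fin m)) : Bool :=
  if condL m σ then false else true

open Classical in
noncomputable def bitQ (m : ℕ) (σ : Equiv.Perm (Fin m)) (i : ℕ) : Bool :=
  if condQ m i (canonB m σ i) then false else true

open Classical in
noncomputable def bitP (m : ℕ) (σ : Equiv.Perm (Fin m)) (i : ℕ) : Bool :=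
  if condE m i (qstep m i (canonB m σ i)) then false else true

lemma bool_if_iff {P P' : Prop} [Decidable P] [Decidable P']
    (h : (if P then false else true) = (if P' then false else true)) : P ↔ P' := by
  by_cases a : P <;> by_cases b : P'
  · exact iff_of_true a b
  · rw [if_pos a, if_neg b] at h; simp at h
  · rw [if_neg a, if_pos b] at h; simp at h
  · exact iff_of_false a b

lemma canon_inj (m : ℕ) (σ σ' : Equiv.Perm (Fin m))
    (h : canonB m σ (m/4) = canonB m σ' (m/4))
    (hL : bitL m σ = bitL m σ')
    (hQ : ∀ i < m/4, bitQ m σ i = bitQ m σ' i)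
    (hP : ∀ i < m/4, bitP m σ i = bitP m σ' i) : σ = σ' := by
  classical
  have key : ∀ t, canonB m σ (m/4 - t) = canonB m σ' (m/4 - t) := by
    intro t
    induction t with
    | zero => simpa using h
    | succ s ih =>
      by_cases hs : m/4 - s = 0
      · have h0 : m/4 - (s+1) = 0 := by omega
        rw [h0]
        rw [hs] at ih
        exact ih
      · have hjs : m/4 - s = (m/4 - (s+1)) + 1 := by omega
        set j := m/4 - (s+1) with hj
        have hjlt : j < m/4 := by omega
        rw [hjs] at ih
        have ih' : estep m j (qstep m j (canonB m σ j)) =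
            estep m j (qstep m j (canonB m σ' j)) := ih
        have hPb : condE m j (qstep m j (canonB m σ j)) ↔
            condE m j (qstep m j (canonB m σ' j)) := bool_if_iff (hP j hjlt)
        have hz : qstep m j (canonB m σ j) = qstep m j (canonB m σ' j) := by
          unfold estep at ih'
          exact ifstep_inj _ _ ih' hPb
        have hQb : condQ m j (canonB m σ j) ↔ condQ m j (canonB m σ' j) :=
          bool_if_iff (hQ j hjlt)
        unfold qstep at hz
        exact ifstep_inj _ _ hz hQb
  have h0 := key (m/4)
  rw [Nat.sub_self] at h0
  have h0' : lstep m σ = lstep m σ' := h0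
  unfold lstep at h0'
  exact ifstep_inj _ _ h0' (bool_if_iff hL)

noncomputable def famA (m : ℕ) : Finset (Equiv.Perm (Fin m)) :=
  @Finset.filter _ (fun σ => memA m σ) (Classical.decPred _) Finset.univ

lemma mem_famA (m : ℕ) (σ : Equiv.Perm (Fin m)) : σ ∈ famA m ↔ memA m σ := by
  classical
  rw [famA]
  rw [Finset.mem_filter]
  simp

theorem count_bound (m : ℕ) :
    Nat.factorial m ≤ 2^(m/2) * (famA m).card := by
  classical
  set K := m/4 with hK
  set A : Finset (Equiv.Perm (Fin m)) := famA m with hA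
  set BF : Finset Bool := if 2 ≤ m % 4 then (Finset.univ : Finset Bool) else {false} with hBF
  set T : Finset (Equiv.Perm (Fin m) × ((Fin K → Bool × Bool) × Bool)) :=
    A ×ˢ ((Finset.univ : Finset (Fin K → Bool × Bool)) ×ˢ BF) with hT
  have hmain : (Finset.univ : Finset (Equiv.Perm (Fin m))).card ≤ T.card := by
    apply Finset.card_le_card_of_injOn
      (fun σ => (canonB m σ K, (fun i : Fin K => (bitQ m σ i.val, bitP m σ i.val), bitL m σ)))
    · intro σ _
      rw [hT, Finset.mem_coe, Finset.mem_product]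
      constructor
      · rw [hA, mem_famA]
        exact canonB_memA m σ
      · rw [Finset.mem_product]
        refine ⟨Finset.mem_univ _, ?_⟩
        rw [hBF]
        split_ifs with h2
        · exact Finset.mem_univ _
        · simp only [Finset.mem_singleton]
          have hcl : condL m σ := by
            exact ⟨fun h => absurd h (by omega), fun h => absurd h (by omega)⟩
          simp [bitL, hcl]
    · intro σ _ σ' _ heq
      simp only [Prod.mk.injEq] at heq
      obtain ⟨h1, h2, h3⟩ := heq
      apply canon_inj m σ σ' h1 h3
      · intro i hi
        have := congrFun h2 ⟨i, hi⟩
        exact (Prod.mk.injEq _ _ _ _ ▸ this).1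
      · intro i hi
        have := congrFun h2 ⟨i, hi⟩
        exact (Prod.mk.injEq _ _ _ _ ▸ this).2
  have hcardU : (Finset.univ : Finset (Equiv.Perm (Fin m))).card = Nat.factorial m := by
    rw [Finset.card_univ, Fintype.card_perm, Fintype.card_fin]
  have hcardT : T.card = A.card * (4^K * BF.card) := by
    rw [hT, Finset.card_product, Finset.card_product]
    congr 2
    rw [Finset.card_univ, Fintype.card_fun, Fintype.card_prod, Fintype.card_bool,
      Fintype.card_fin]
  have hBFcard : 4^K * BF.card ≤ 2^(m/2) := by
    have h4 : (4:ℕ)^K = 2^(2*K) := by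
      rw [pow_mul]; norm_num
    rw [hBF]
    split_ifs with h2
    · rw [Finset.card_univ, Fintype.card_bool, h4]
      have : 2*K + 1 ≤ m/2 := by omega
      calc 2^(2*K) * 2 = 2^(2*K+1) := by ring
        _ ≤ 2^(m/2) := Nat.pow_le_pow_right (by norm_num) this
    · rw [Finset.card_singleton, h4, mul_one]
      exact Nat.pow_le_pow_right (by norm_num) (by omega)
  calc Nat.factorial m = (Finset.univ : Finset (Equiv.Perm (Fin m))).card := hcardU.symm
    _ ≤ T.card := hmain
    _ = A.card * (4^K * BF.card) := hcardT
    _ ≤ A.card * 2^(m/2) := Nat.mul_le_mul_left _ hBFcard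
    _ = 2^(m/2) * A.card := Nat.mul_comm _ _

/-! ### the main theorem -/

theorem stmt0 (n : ℕ) (hn : 4 ≤ n) :
    ∃ F : Finset (Finset (Sym2 (Fin n))),
      (∀ E ∈ F, IsHamPath n E) ∧
      (∀ E₁ ∈ F, ∀ E₂ ∈ F, E₁ ≠ E₂ → Crossing n E₁ E₂) ∧
      (Nat.factorial (n / 2 - 1) : ℝ) / 2 ^ (n / 4) ≤ (F.card : ℝ) := by
  classical
  set m := (n-1)/2 with hm
  have hn1 : 2*m+1 ≤ n := by omega
  have hn2 : n ≤ 2*m+2 := by omega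
  set F : Finset (Finset (Sym2 (Fin n))) :=
    (famA m).image (fun σ => hamPathEdges n (Pperm n m σ)) with hF
  refine ⟨F, ?_, ?_, ?_⟩
  · intro E hE
    rw [hF, Finset.mem_image] at hE
    obtain ⟨σ, _, rfl⟩ := hE
    exact ⟨_, rfl⟩
  · intro E₁ h₁ E₂ h₂ hne
    rw [hF, Finset.mem_image] at h₁ h₂
    obtain ⟨σ, hσ, rfl⟩ := h₁
    obtain ⟨τ, hτ, rfl⟩ := h₂
    have hst : σ ≠ τ := fun h => hne (by rw [h])
    exact crossA n m hn1 hn2 σ τ ((mem_famA m σ).mp hσ) ((mem_famA m τ).mp hτ) hst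
  · have hinj : Set.InjOn (fun σ => hamPathEdges n (Pperm n m σ)) (famA m) := by
      intro σ hσ τ hτ h
      simp only [Finset.mem_coe] at hσ hτ
      by_contra hst
      have hcr := crossA n m hn1 hn2 σ τ ((mem_famA m σ).mp hσ) ((mem_famA m τ).mp hτ) hst
      obtain ⟨v, hv⟩ := hcr
      simp only at h
      rw [h, Finset.union_self] at hv
      have := filter_card_le_two n (Pperm n m τ) v
      omega
    have hcard : F.card = (famA m).card := by
      rw [hF]
      exact Finset.card_image_of_injOn hinj
    have hkey : Nat.factorial (n/2 - 1) ≤ 2^(n/4) * F.card := by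
      have h1 : Nat.factorial (n/2-1) ≤ Nat.factorial m := Nat.factorial_le (by omega)
      have h2 := count_bound m
      have h3 : (2:ℕ)^(m/2) ≤ 2^(n/4) := Nat.pow_le_pow_right (by norm_num) (by omega)
      calc Nat.factorial (n/2-1) ≤ Nat.factorial m := h1
        _ ≤ 2^(m/2) * (famA m).card := h2
        _ ≤ 2^(n/4) * (famA m).card := Nat.mul_le_mul_right _ h3
        _ = 2^(n/4) * F.card := by rw [hcard]
    rw [div_le_iff₀ (by positivity)]
    calc (Nat.factorial (n/2-1) : ℝ) ≤ ((2^(n/4) * F.card : ℕ) : ℝ) := by exact_mod_cast hkey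
      _ = (F.card : ℝ) * 2^(n/4) := by push_cast; ring
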